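/- Let x < a and b < 0, and let f(s) = (a−x)·s^{−3/2}·φ((a + bs − x)/√s) for s > 0 be the first-passage-time density of Brownian motion started at x through the line a + bt. Then 1 − ∫_0^∞ f(s)·(∫_0^∞ e^{−b²(s+t)/2}·√s/(π(s+t)√t) dt) ds = ∫_0^∞ (1 − 2Φ(b√s))·f(s) ds, and this quantity is strictly positive; that is, P(T₂ = +∞) = 2·sgn(b)·E(Φ(b√τ₁) − 1/2) > 0. -/

import Mathlib

open MeasureTheory

/-- The standard normal density `φ`. -/
noncomputable def stdPhi (z : ℝ) : ℝ := Real.exp (-z ^ 2 / 2) / Real.sqrt (2 * Real.pi)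

/-- The standard normal cumulative distribution function `Φ`. -/
noncomputable def Phi (y : ℝ) : ℝ := ∫ z in Set.Iic y, stdPhi z

/-- The (possibly defective) first-passage-time density of Brownian motion started at `x`
through the line `a + b s`. -/
noncomputable def fpt (a x b s : ℝ) : ℝ :=
  (a - x) * s ^ (-(3:ℝ) / 2) * stdPhi ((a + b * s - x) / Real.sqrt s)

open Set Filter Topology Real

lemma stdPhi_eq_gauss : stdPhi = ProbabilityTheory.gaussianPDFReal 0 1 := by
  ext z
  simp [stdPhi, ProbabilityTheory.gaussianPDFReal, div_eq_inv_mul]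

lemma stdPhi_pos (z : ℝ) : 0 < stdPhi z := by
  rw [stdPhi_eq_gauss]; exact ProbabilityTheory.gaussianPDFReal_pos 0 1 z one_ne_zero

lemma stdPhi_cont : Continuous stdPhi := by
  apply Continuous.div_const
  exact (continuous_pow 2).neg.div_const 2 |>.rexp

lemma integrable_stdPhi : Integrable stdPhi := by
  rw [stdPhi_eq_gauss]; exact ProbabilityTheory.integrable_gaussianPDFReal 0 1

lemma integral_stdPhi : ∫ z, stdPhi z = 1 := by
  rw [stdPhi_eq_gauss]; exact ProbabilityTheory.integral_gaussianPDFReal_eq_one 0 one_ne_zero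

lemma stdPhi_even (z : ℝ) : stdPhi (-z) = stdPhi z := by simp [stdPhi]

lemma Phi_mono : Monotone Phi := by
  intro y₁ y₂ h
  exact setIntegral_mono_set integrable_stdPhi.integrableOn
    (Eventually.of_forall fun z => (stdPhi_pos z).le) (HasSubset.Subset.eventuallyLE (Iic_subset_Iic.2 h))

lemma Phi_nonneg (y : ℝ) : 0 ≤ Phi y :=
  setIntegral_nonneg measurableSet_Iic fun z _ => (stdPhi_pos z).le

lemma Phi_tendsto_atTop : Tendsto Phi atTop (𝓝 1) := by
  rw [← integral_stdPhi]
  exact (aecover_Iic tendsto_id).integral_tendsto_of_countably_generated integrable_stdPhi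

lemma integral_Ioi_stdPhi_tendsto : Tendsto (fun y => ∫ z in Ioi y, stdPhi z) atBot (𝓝 1) := by
  rw [← integral_stdPhi]
  exact (aecover_Ioi tendsto_id).integral_tendsto_of_countably_generated integrable_stdPhi

lemma Phi_add_Ioi (y : ℝ) : Phi y + ∫ z in Ioi y, stdPhi z = 1 := by
  rw [Phi, intervalIntegral.integral_Iic_add_Ioi integrable_stdPhi.integrableOn integrable_stdPhi.integrableOn,
    integral_stdPhi]

lemma Phi_tendsto_atBot : Tendsto Phi atBot (𝓝 0) := by
  have : Phi = fun y => 1 - ∫ z in Ioi y, stdPhi z := by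
    ext y; have := Phi_add_Ioi y; linarith
  rw [this]
  simpa using (tendsto_const_nhds (x := (1:ℝ))).sub integral_Ioi_stdPhi_tendsto

lemma Phi_le_one (y : ℝ) : Phi y ≤ 1 := by
  have h := Phi_add_Ioi y
  have : 0 ≤ ∫ z in Ioi y, stdPhi z :=
    setIntegral_nonneg measurableSet_Ioi fun z _ => (stdPhi_pos z).le
  linarith

lemma Phi_zero : Phi 0 = 1 / 2 := by
  have key : Phi 0 = ∫ z in Ioi (0:ℝ), stdPhi z := by
    rw [Phi, integral_Iic_eq_integral_Iio]
    rw [show Iio (0:ℝ) = (fun z => -z) '' (Ioi 0) by simp [Set.image_neg_eq_neg]]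
    rw [integral_image_eq_integral_abs_deriv_smul measurableSet_Ioi
      (fun z _ => (hasDerivAt_neg z).hasDerivWithinAt) (fun u _ v _ h => by linarith) stdPhi]
    simp [stdPhi_even]
  have := Phi_add_Ioi 0
  rw [← key] at this; linarith

lemma Phi_lt_half {y : ℝ} (hy : y < 0) : Phi y < 1 / 2 := by
  rw [← Phi_zero]
  have h1 : Phi 0 - Phi y = ∫ z in y..0, stdPhi z := by
    rw [Phi, Phi, intervalIntegral.integral_Iic_sub_Iic integrable_stdPhi.integrableOn
      integrable_stdPhi.integrableOn]
  have h2 : 0 < ∫ z in y..0, stdPhi z :=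
    intervalIntegral.intervalIntegral_pos_of_pos integrable_stdPhi.intervalIntegrable
      (fun z => stdPhi_pos z) hy
  linarith

lemma Phi_hasDerivAt (y : ℝ) : HasDerivAt Phi (stdPhi y) y := by
  have key : ∀ w, Phi w = Phi 0 + ∫ z in (0:ℝ)..w, stdPhi z := by
    intro w
    have := intervalIntegral.integral_Iic_sub_Iic (f := stdPhi) (μ := volume) (a := (0:ℝ))
      (b := w) integrable_stdPhi.integrableOn integrable_stdPhi.integrableOn
    rw [Phi, Phi]; linarith
  have : HasDerivAt (fun w => Phi 0 + ∫ z in (0:ℝ)..w, stdPhi z) (stdPhi y) y := by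
    refine HasDerivAt.const_add _ ?_
    exact intervalIntegral.integral_hasDerivAt_right integrable_stdPhi.intervalIntegrable
      integrable_stdPhi.aestronglyMeasurable.stronglyMeasurableAtFilter
      stdPhi_cont.continuousAt
  exact this.congr_of_eventuallyEq (Eventually.of_forall fun w => (key w))

noncomputable def Fcdf (a x b t : ℝ) : ℝ :=
  if t ≤ 0 then 0 else
    Phi ((x - a - b * t) / Real.sqrt t)
      + Real.exp (2 * b * (x - a)) * Phi ((x - a + b * t) / Real.sqrt t)

lemma rpow_neg_three_half {t : ℝ} (ht : 0 < t) : t ^ (-(3:ℝ)/2) = (t * Real.sqrt t)⁻¹ := by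
  rw [show (-(3:ℝ)/2) = -(3/2) by norm_num, Real.rpow_neg ht.le]
  congr 1
  rw [show ((3:ℝ)/2) = 1 + 1/2 by norm_num, Real.rpow_add ht, Real.rpow_one,
    ← Real.sqrt_eq_rpow]

lemma fpt_pos {a x b : ℝ} (hx : x < a) {t : ℝ} (ht : 0 < t) : 0 < fpt a x b t := by
  have h1 : 0 < t ^ (-(3:ℝ)/2) := Real.rpow_pos_of_pos ht _
  exact mul_pos (mul_pos (by linarith) h1) (stdPhi_pos _)

lemma Fcdf_hasDerivAt {a x b : ℝ} (hx : x < a) {t : ℝ} (ht : 0 < t) :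
    HasDerivAt (Fcdf a x b) (fpt a x b t) t := by
  have hq : (0:ℝ) < Real.sqrt t := Real.sqrt_pos.2 ht
  have hq2 : Real.sqrt t ^ 2 = t := Real.sq_sqrt ht.le
  set q := Real.sqrt t with hqdef
  -- derivatives of the two arguments
  have hsq : HasDerivAt Real.sqrt (1 / (2 * q)) t := Real.hasDerivAt_sqrt ht.ne'
  have hnum1 : HasDerivAt (fun t : ℝ => x - a - b * t) (-b) t := by
    simpa using ((hasDerivAt_id t).const_mul b).const_sub (x - a)
  have hnum2 : HasDerivAt (fun t : ℝ => x - a + b * t) b t := by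
    simpa using ((hasDerivAt_id t).const_mul b).const_add (x - a)
  have hu : HasDerivAt (fun t : ℝ => (x - a - b * t) / Real.sqrt t)
      (((-b) * q - (x - a - b * t) * (1 / (2 * q))) / t) t := by
    have := hnum1.div hsq hq.ne'
    rwa [hq2] at this
  have hv : HasDerivAt (fun t : ℝ => (x - a + b * t) / Real.sqrt t)
      ((b * q - (x - a + b * t) * (1 / (2 * q))) / t) t := by
    have := hnum2.div hsq hq.ne'
    rwa [hq2] at this
  set du := ((-b) * q - (x - a - b * t) * (1 / (2 * q))) / t with hdu
  set dv := (b * q - (x - a + b * t) * (1 / (2 * q))) / t with hdv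
  have hPu : HasDerivAt (fun t : ℝ => Phi ((x - a - b * t) / Real.sqrt t))
      (stdPhi ((x - a - b * t) / q) * du) t := (Phi_hasDerivAt _).comp t hu
  have hPv : HasDerivAt (fun t : ℝ => Phi ((x - a + b * t) / Real.sqrt t))
      (stdPhi ((x - a + b * t) / q) * dv) t := (Phi_hasDerivAt _).comp t hv
  have hG : HasDerivAt (fun t : ℝ => Phi ((x - a - b * t) / Real.sqrt t)
      + Real.exp (2 * b * (x - a)) * Phi ((x - a + b * t) / Real.sqrt t))
      (stdPhi ((x - a - b * t) / q) * du
        + Real.exp (2 * b * (x - a)) * (stdPhi ((x - a + b * t) / q) * dv)) t :=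
    hPu.add (hPv.const_mul _)
  -- the derivative equals fpt
  have hexp : Real.exp (2 * b * (x - a)) * stdPhi ((x - a + b * t) / q)
      = stdPhi ((x - a - b * t) / q) := by
    unfold stdPhi
    rw [mul_div_assoc', ← Real.exp_add]
    congr 2
    rw [div_pow, div_pow, hq2]
    field_simp
    ring
  have heven : stdPhi ((a + b * t - x) / q) = stdPhi ((x - a - b * t) / q) := by
    rw [show (x - a - b * t) / q = -((a + b * t - x) / q) by ring, stdPhi_even]
  have halg : stdPhi ((x - a - b * t) / q) * du
      + Real.exp (2 * b * (x - a)) * (stdPhi ((x - a + b * t) / q) * dv)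
      = fpt a x b t := by
    rw [← mul_assoc, hexp, ← mul_add]
    unfold fpt
    rw [heven, rpow_neg_three_half ht, hdu, hdv]
    rw [mul_comm ((a - x) * (t * q)⁻¹) _]
    congr 1
    field_simp
    ring
  rw [← halg]
  apply hG.congr_of_eventuallyEq
  filter_upwards [eventually_gt_nhds ht] with s hs
  simp [Fcdf, not_le.2 hs]

lemma arg_split {c d t : ℝ} (ht : 0 < t) :
    c / Real.sqrt t + d * Real.sqrt t = (c + d * t) / Real.sqrt t := by
  have hq : Real.sqrt t ≠ 0 := (Real.sqrt_pos.2 ht).ne'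
  rw [div_add' _ _ _ hq, mul_assoc, Real.mul_self_sqrt ht.le]

lemma Fcdf_tendsto_atTop {a x b : ℝ} (hx : x < a) (hb : b < 0) :
    Tendsto (Fcdf a x b) atTop (𝓝 1) := by
  have hsqrt : Tendsto Real.sqrt atTop atTop := by
    refine tendsto_atTop_atTop.2 fun c => ⟨(max c 0) ^ 2, fun t ht => ?_⟩
    calc c ≤ max c 0 := le_max_left _ _
    _ = Real.sqrt ((max c 0) ^ 2) := (Real.sqrt_sq (le_max_right _ _)).symm
    _ ≤ Real.sqrt t := Real.sqrt_le_sqrt ht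
  have hzero : Tendsto (fun t : ℝ => (x - a) / Real.sqrt t) atTop (𝓝 0) := by
    simpa [div_eq_mul_inv] using (hsqrt.inv_tendsto_atTop).const_mul (x - a)
  have harg1 : Tendsto (fun t : ℝ => (x - a) / Real.sqrt t + (-b) * Real.sqrt t) atTop atTop := by
    apply tendsto_atTop_add_left_of_le' atTop (-1)
    · filter_upwards [hzero.eventually (eventually_ge_nhds (by norm_num : (-1:ℝ) < 0))] with t h
      exact h
    · exact (tendsto_const_mul_atTop_of_pos (by linarith)).2 hsqrt
  have harg2 : Tendsto (fun t : ℝ => (x - a) / Real.sqrt t + b * Real.sqrt t) atTop atBot := by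
    apply tendsto_atBot_add_left_of_ge' atTop 1
    · filter_upwards [hzero.eventually (eventually_le_nhds (by norm_num : (0:ℝ) < 1))] with t h
      exact h
    · exact (tendsto_const_mul_atBot_of_neg hb).2 hsqrt
  have h1 : Tendsto (fun t : ℝ => Phi ((x - a - b * t) / Real.sqrt t)) atTop (𝓝 1) := by
    apply (Phi_tendsto_atTop.comp harg1).congr'
    filter_upwards [eventually_gt_atTop (0:ℝ)] with t ht
    have hq : Real.sqrt t ≠ 0 := (Real.sqrt_pos.2 ht).ne'
    simp only [Function.comp]
    congr 1
    rw [arg_split ht]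
    ring_nf
  have h2 : Tendsto (fun t : ℝ => Phi ((x - a + b * t) / Real.sqrt t)) atTop (𝓝 0) := by
    apply (Phi_tendsto_atBot.comp harg2).congr'
    filter_upwards [eventually_gt_atTop (0:ℝ)] with t ht
    have hq : Real.sqrt t ≠ 0 := (Real.sqrt_pos.2 ht).ne'
    simp only [Function.comp]
    congr 1
    rw [arg_split ht]
  have : Tendsto (fun t : ℝ => Phi ((x - a - b * t) / Real.sqrt t)
      + Real.exp (2 * b * (x - a)) * Phi ((x - a + b * t) / Real.sqrt t)) atTop
      (𝓝 (1 + Real.exp (2 * b * (x - a)) * 0)) := h1.add (h2.const_mul _)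
  rw [mul_zero, add_zero] at this
  apply this.congr'
  filter_upwards [eventually_gt_atTop (0:ℝ)] with t ht
  simp [Fcdf, not_le.2 ht]

lemma Fcdf_continuousWithinAt {a x b : ℝ} (hx : x < a) :
    ContinuousWithinAt (Fcdf a x b) (Ici 0) 0 := by
  rw [← continuousWithinAt_Ioi_iff_Ici]
  have hF0 : Fcdf a x b 0 = 0 := by simp [Fcdf]
  unfold ContinuousWithinAt
  rw [hF0]
  have hsqrt : Tendsto Real.sqrt (𝓝[>] (0:ℝ)) (𝓝[>] (0:ℝ)) := by
    rw [tendsto_nhdsWithin_iff]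
    constructor
    · have := (Real.continuous_sqrt.tendsto 0).mono_left (nhdsWithin_le_nhds (s := Ioi (0:ℝ)))
      simpa using this
    · filter_upwards [self_mem_nhdsWithin] with t ht
      exact Real.sqrt_pos.2 ht
  have hinv : Tendsto (fun t : ℝ => (Real.sqrt t)⁻¹) (𝓝[>] (0:ℝ)) atTop :=
    tendsto_inv_nhdsGT_zero.comp hsqrt
  have hbot : Tendsto (fun t : ℝ => (x - a) / Real.sqrt t) (𝓝[>] (0:ℝ)) atBot := by
    simp only [div_eq_mul_inv]
    exact (tendsto_const_mul_atBot_of_neg (by linarith)).2 hinv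
  have hsq0 : Tendsto (fun t : ℝ => Real.sqrt t) (𝓝[>] (0:ℝ)) (𝓝 0) :=
    hsqrt.mono_right nhdsWithin_le_nhds
  have harg : ∀ d : ℝ, Tendsto (fun t : ℝ => (x - a + d * t) / Real.sqrt t)
      (𝓝[>] (0:ℝ)) atBot := by
    intro d
    have h2 : Tendsto (fun t : ℝ => d * Real.sqrt t) (𝓝[>] (0:ℝ)) (𝓝 (d * 0)) :=
      hsq0.const_mul d
    rw [mul_zero] at h2
    have hsum : Tendsto (fun t : ℝ => (x - a) / Real.sqrt t + d * Real.sqrt t)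
        (𝓝[>] (0:ℝ)) atBot := by
      apply tendsto_atBot_add_right_of_ge' _ _ hbot
      filter_upwards [h2.eventually (eventually_le_nhds (by norm_num : (0:ℝ) < 1))] with t h
      exact h
    apply hsum.congr'
    filter_upwards [self_mem_nhdsWithin] with t ht
    rw [arg_split ht]
  have h1 : Tendsto (fun t : ℝ => Phi ((x - a - b * t) / Real.sqrt t)) (𝓝[>] (0:ℝ)) (𝓝 0) := by
    have := Phi_tendsto_atBot.comp (harg (-b))
    apply this.congr
    intro t
    simp only [Function.comp]
    ring_nf
  have h2 : Tendsto (fun t : ℝ => Phi ((x - a + b * t) / Real.sqrt t)) (𝓝[>] (0:ℝ)) (𝓝 0) :=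
    Phi_tendsto_atBot.comp (harg b)
  have hsum : Tendsto (fun t : ℝ => Phi ((x - a - b * t) / Real.sqrt t)
      + Real.exp (2 * b * (x - a)) * Phi ((x - a + b * t) / Real.sqrt t)) (𝓝[>] (0:ℝ))
      (𝓝 (0 + Real.exp (2 * b * (x - a)) * 0)) := h1.add (h2.const_mul _)
  rw [mul_zero, add_zero] at hsum
  apply hsum.congr'
  filter_upwards [self_mem_nhdsWithin] with t ht
  simp [Fcdf, not_le.2 (mem_Ioi.1 ht)]

lemma fpt_integrableOn {a x b : ℝ} (hx : x < a) (hb : b < 0) :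
    IntegrableOn (fpt a x b) (Ioi 0) :=
  integrableOn_Ioi_deriv_of_nonneg (Fcdf_continuousWithinAt hx)
    (fun t ht => Fcdf_hasDerivAt hx (mem_Ioi.1 ht))
    (fun t ht => (fpt_pos hx (mem_Ioi.1 ht)).le) (Fcdf_tendsto_atTop hx hb)

lemma integral_fpt {a x b : ℝ} (hx : x < a) (hb : b < 0) :
    ∫ s in Ioi (0:ℝ), fpt a x b s = 1 := by
  have := integral_Ioi_of_hasDerivAt_of_nonneg (Fcdf_continuousWithinAt hx)
    (fun t ht => Fcdf_hasDerivAt hx (mem_Ioi.1 ht))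
    (fun t ht => (fpt_pos hx (mem_Ioi.1 ht)).le) (Fcdf_tendsto_atTop hx hb)
  rw [this]
  simp [Fcdf]

lemma integrableOn_exp_neg_mul {α : ℝ} (hα : 0 < α) :
    IntegrableOn (fun v => Real.exp (-(α * v))) (Ioi (0:ℝ)) := by
  simpa [neg_mul] using exp_neg_integrableOn_Ioi 0 hα

lemma integral_exp_neg_mul {α : ℝ} (hα : 0 < α) :
    ∫ v in Ioi (0:ℝ), Real.exp (-(α * v)) = α⁻¹ := by
  have := integral_comp_mul_left_Ioi (fun y => Real.exp (-y)) 0 hα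
  simp only [mul_zero, smul_eq_mul] at this
  rw [this, integral_exp_neg_Ioi_zero, mul_one]

lemma sq_image_Ioi {r : ℝ} (hr : 0 ≤ r) : (fun z : ℝ => z ^ 2) '' Ioi r = Ioi (r ^ 2) := by
  ext y
  constructor
  · rintro ⟨z, hz, rfl⟩
    have := mem_Ioi.1 hz
    simp only [mem_Ioi]
    nlinarith
  · intro hy
    have hy0 : 0 ≤ y := le_trans (by positivity) (le_of_lt hy)
    refine ⟨Real.sqrt y, ?_, Real.sq_sqrt hy0⟩
    rw [mem_Ioi, show r = Real.sqrt (r ^ 2) from (Real.sqrt_sq hr).symm]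
    exact Real.sqrt_lt_sqrt (by positivity) hy

lemma sq_injOn_Ioi {r : ℝ} (hr : 0 ≤ r) : InjOn (fun z : ℝ => z ^ 2) (Ioi r) := by
  intro u hu v hv h
  simp only [mem_Ioi] at hu hv
  simp only at h
  have key : (u - v) * (u + v) = 0 := by linear_combination h
  rcases mul_eq_zero.1 key with h1 | h1
  · linarith
  · nlinarith

lemma sq_hasDerivWithinAt {r : ℝ} (z : ℝ) (hz : z ∈ Ioi r) :
    HasDerivWithinAt (fun z : ℝ => z ^ 2) (2 * z) (Ioi r) z := by
  simpa using ((hasDerivAt_pow 2 z).hasDerivWithinAt (s := Ioi r))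

lemma gammaHalf_integrableOn {α : ℝ} (hα : 0 < α) :
    IntegrableOn (fun t => Real.exp (-(α * t)) * (Real.sqrt t)⁻¹) (Ioi (0:ℝ)) := by
  have himg : (fun z : ℝ => z ^ 2) '' Ioi 0 = Ioi (0:ℝ) := by
    simpa using sq_image_Ioi (le_refl (0:ℝ))
  rw [← himg, integrableOn_image_iff_integrableOn_abs_deriv_smul measurableSet_Ioi
    sq_hasDerivWithinAt (sq_injOn_Ioi le_rfl)]
  have : IntegrableOn (fun z : ℝ => 2 * Real.exp (-α * z ^ 2)) (Ioi (0:ℝ)) :=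
    ((integrable_exp_neg_mul_sq hα).const_mul 2).integrableOn
  apply this.congr_fun ?_ measurableSet_Ioi
  intro z hz
  have hz0 : (0:ℝ) < z := mem_Ioi.1 hz
  simp only [smul_eq_mul]
  rw [Real.sqrt_sq hz0.le, abs_of_pos (by linarith : (0:ℝ) < 2 * z)]
  field_simp [neg_mul]

lemma gammaHalf_integral {α : ℝ} (hα : 0 < α) :
    ∫ t in Ioi (0:ℝ), Real.exp (-(α * t)) * (Real.sqrt t)⁻¹
      = Real.sqrt Real.pi * (Real.sqrt α)⁻¹ := by
  have := integral_comp_rpow_Ioi (fun t => Real.exp (-(α * t)) * (Real.sqrt t)⁻¹)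
    (p := 2) two_ne_zero
  rw [← this]
  have congr1 : ∀ z ∈ Ioi (0:ℝ),
      (|(2:ℝ)| * z ^ ((2:ℝ) - 1)) • (Real.exp (-(α * z ^ (2:ℝ))) * (Real.sqrt (z ^ (2:ℝ)))⁻¹)
        = 2 * Real.exp (-α * z ^ 2) := by
    intro z hz
    have hz0 : (0:ℝ) < z := mem_Ioi.1 hz
    have h2 : z ^ (2:ℝ) = z ^ 2 := by
      rw [show ((2:ℝ)) = ((2:ℕ):ℝ) by norm_num, Real.rpow_natCast]
    have h1 : z ^ ((2:ℝ) - 1) = z := by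
      norm_num
    rw [h2, h1, Real.sqrt_sq hz0.le, smul_eq_mul]
    field_simp [neg_mul]
    ring
  rw [setIntegral_congr_fun measurableSet_Ioi congr1, integral_const_mul,
    integral_gaussian_Ioi, Real.sqrt_div Real.pi_pos.le]
  ring

lemma shift_sq_integral {s c : ℝ} (hs : 0 < s) (hc : 0 < c) :
    ∫ v in Ioi (0:ℝ), Real.exp (-(s * (c + v))) * (Real.sqrt (c + v))⁻¹
      = 2 * ∫ z in Ioi (Real.sqrt c), Real.exp (-(s * z ^ 2)) := by
  have hrc : (0:ℝ) < Real.sqrt c := Real.sqrt_pos.2 hc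
  have himg : (fun z : ℝ => z ^ 2 - c) '' Ioi (Real.sqrt c) = Ioi (0:ℝ) := by
    ext y
    constructor
    · rintro ⟨z, hz, rfl⟩
      simp only [mem_Ioi] at *
      nlinarith [Real.sq_sqrt hc.le]
    · intro hy
      have hy0 : (0:ℝ) < y := mem_Ioi.1 hy
      refine ⟨Real.sqrt (c + y), ?_, ?_⟩
      · exact mem_Ioi.2 (Real.sqrt_lt_sqrt hc.le (by linarith))
      · simp only
        rw [Real.sq_sqrt (by linarith)]
        ring
  have hderiv : ∀ z ∈ Ioi (Real.sqrt c),
      HasDerivWithinAt (fun z : ℝ => z ^ 2 - c) (2 * z) (Ioi (Real.sqrt c)) z := by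
    intro z _
    simpa using ((hasDerivAt_pow 2 z).sub_const c).hasDerivWithinAt
  have hinj : InjOn (fun z : ℝ => z ^ 2 - c) (Ioi (Real.sqrt c)) := by
    intro u hu v hv h
    simp only at h
    exact sq_injOn_Ioi (Real.sqrt_nonneg c) hu hv (by simp only; linarith)
  rw [← himg, integral_image_eq_integral_abs_deriv_smul measurableSet_Ioi hderiv hinj]
  rw [← integral_const_mul]
  apply setIntegral_congr_fun measurableSet_Ioi
  intro z hz
  have hz0 : (0:ℝ) < z := lt_trans hrc (mem_Ioi.1 hz)
  simp only [smul_eq_mul]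
  rw [show c + (z ^ 2 - c) = z ^ 2 by ring, Real.sqrt_sq hz0.le,
    abs_of_pos (by linarith : (0:ℝ) < 2 * z)]
  field_simp

lemma Phi_eq_gauss_integral {b s : ℝ} (hb : b < 0) (hs : 0 < s) :
    Phi (b * Real.sqrt s)
      = Real.sqrt (2 * s) * (Real.sqrt (2 * Real.pi))⁻¹
          * ∫ z in Ioi (Real.sqrt (b ^ 2 / 2)), Real.exp (-(s * z ^ 2)) := by
  set k := Real.sqrt (2 * s) with hkdef
  have hk : 0 < k := Real.sqrt_pos.2 (by linarith)
  have hk2 : k ^ 2 = 2 * s := Real.sq_sqrt (by linarith)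
  have hedge : -(k * Real.sqrt (b ^ 2 / 2)) = b * Real.sqrt s := by
    rw [hkdef, ← Real.sqrt_mul (by linarith : (0:ℝ) ≤ 2 * s),
      show 2 * s * (b ^ 2 / 2) = b ^ 2 * s by ring, Real.sqrt_mul (sq_nonneg b),
      Real.sqrt_sq_eq_abs, abs_of_neg hb]
    ring
  have himg : (fun z : ℝ => -(k * z)) '' Ioi (Real.sqrt (b ^ 2 / 2))
      = Iio (b * Real.sqrt s) := by
    ext y
    constructor
    · rintro ⟨z, hz, rfl⟩
      have := mem_Ioi.1 hz
      rw [mem_Iio, ← hedge]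
      nlinarith
    · intro hy
      have hy' : y < -(k * Real.sqrt (b ^ 2 / 2)) := by rw [hedge]; exact mem_Iio.1 hy
      refine ⟨-y / k, ?_, ?_⟩
      · rw [mem_Ioi, lt_div_iff₀ hk]
        nlinarith
      · field_simp
  have hderiv : ∀ z ∈ Ioi (Real.sqrt (b ^ 2 / 2)),
      HasDerivWithinAt (fun z : ℝ => -(k * z)) (-k) (Ioi (Real.sqrt (b ^ 2 / 2))) z := by
    intro z _
    exact (((hasDerivAt_id z).const_mul k).neg).hasDerivWithinAt.congr_deriv (by ring)
  have hinj : InjOn (fun z : ℝ => -(k * z)) (Ioi (Real.sqrt (b ^ 2 / 2))) := by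
    intro u _ v _ h
    simp only [neg_inj] at h
    exact mul_left_cancel₀ hk.ne' h
  rw [Phi, integral_Iic_eq_integral_Iio, ← himg,
    integral_image_eq_integral_abs_deriv_smul measurableSet_Ioi hderiv hinj]
  rw [mul_assoc, ← integral_const_mul, ← integral_const_mul]
  apply setIntegral_congr_fun measurableSet_Ioi
  intro z _
  simp only [smul_eq_mul, abs_neg, abs_of_pos hk]
  rw [show stdPhi (-(k * z)) = stdPhi (k * z) from stdPhi_even _]
  unfold stdPhi
  rw [mul_pow, hk2, show -(2 * s * z ^ 2) / 2 = -(s * z ^ 2) by ring]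
  field_simp

lemma inner_integral_eq {b s : ℝ} (hb : b < 0) (hs : 0 < s) :
    (∫ t in Ioi (0:ℝ), Real.exp (-b ^ 2 * (s + t) / 2) * Real.sqrt s /
        (Real.pi * (s + t) * Real.sqrt t))
      = 2 * Phi (b * Real.sqrt s) := by
  have hbne : b ≠ 0 := hb.ne
  set c := b ^ 2 / 2 with hcdef
  have hc : 0 < c := by positivity
  set F : ℝ → ℝ → ℝ := fun t v => Real.exp (-((c + v) * (s + t))) * (Real.sqrt t)⁻¹ with hF
  have hFnonneg : ∀ t v, 0 ≤ F t v := fun t v => by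
    apply mul_nonneg (Real.exp_pos _).le (inv_nonneg.2 (Real.sqrt_nonneg t))
  have hFmeas : AEStronglyMeasurable (Function.uncurry F)
      ((volume.restrict (Ioi (0:ℝ))).prod (volume.restrict (Ioi (0:ℝ)))) := by
    apply Measurable.aestronglyMeasurable
    apply Measurable.mul
    · exact Real.measurable_exp.comp
        (((measurable_const.add measurable_snd).mul (measurable_const.add measurable_fst)).neg)
    · exact (Real.continuous_sqrt.measurable.comp measurable_fst).inv
  have hIntT : ∀ t : ℝ, 0 < t → IntegrableOn (fun v => F t v) (Ioi (0:ℝ)) := by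
    intro t ht
    have hst : (0:ℝ) < s + t := by linarith
    apply IntegrableOn.congr_fun
      (f := fun v => ((Real.sqrt t)⁻¹ * Real.exp (-(c * (s + t)))) * Real.exp (-((s + t) * v)))
      (((integrableOn_exp_neg_mul hst)).const_mul _)
    · intro v _
      simp only [hF]
      rw [show -((c + v) * (s + t)) = -(c * (s + t)) + -((s + t) * v) by ring, Real.exp_add]
      ring
    · exact measurableSet_Ioi
  have hInner : ∀ t : ℝ, 0 < t → (∫ v in Ioi (0:ℝ), F t v)
      = Real.exp (-(c * (s + t))) * (Real.sqrt t)⁻¹ * (s + t)⁻¹ := by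
    intro t ht
    have hst : (0:ℝ) < s + t := by linarith
    have : (∫ v in Ioi (0:ℝ), F t v)
        = ∫ v in Ioi (0:ℝ), ((Real.sqrt t)⁻¹ * Real.exp (-(c * (s + t))))
            * Real.exp (-((s + t) * v)) := by
      apply setIntegral_congr_fun measurableSet_Ioi
      intro v _
      simp only [hF]
      rw [show -((c + v) * (s + t)) = -(c * (s + t)) + -((s + t) * v) by ring, Real.exp_add]
      ring
    rw [this, integral_const_mul, integral_exp_neg_mul hst]
    ring
  have hProd : Integrable (Function.uncurry F)
      ((volume.restrict (Ioi (0:ℝ))).prod (volume.restrict (Ioi (0:ℝ)))) := by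
    rw [integrable_prod_iff hFmeas]
    constructor
    · filter_upwards [ae_restrict_mem measurableSet_Ioi] with t ht
      exact hIntT t (mem_Ioi.1 ht)
    · apply Integrable.mono'
        (g := fun t => (Real.exp (-(c * s)) * s⁻¹) * (Real.exp (-(c * t)) * (Real.sqrt t)⁻¹))
        ((gammaHalf_integrableOn hc).const_mul _)
        (hFmeas.norm.integral_prod_right')
      filter_upwards [ae_restrict_mem measurableSet_Ioi] with t ht
      have ht0 : (0:ℝ) < t := mem_Ioi.1 ht
      have hst : (0:ℝ) < s + t := by linarith
      have hnorm : (fun v => ‖F t v‖) = fun v => F t v := by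
        funext v; exact Real.norm_of_nonneg (hFnonneg t v)
      simp only [Function.uncurry_apply_pair]
      rw [hnorm, hInner t ht0, Real.norm_of_nonneg (by positivity)]
      rw [show -(c * (s + t)) = -(c * s) + -(c * t) by ring, Real.exp_add]
      have h1 : (s + t)⁻¹ ≤ s⁻¹ := by
        apply inv_anti₀ hs (by linarith)
      calc Real.exp (-(c * s)) * Real.exp (-(c * t)) * (Real.sqrt t)⁻¹ * (s + t)⁻¹
          ≤ Real.exp (-(c * s)) * Real.exp (-(c * t)) * (Real.sqrt t)⁻¹ * s⁻¹ := by
            gcongr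
        _ = Real.exp (-(c * s)) * s⁻¹ * (Real.exp (-(c * t)) * (Real.sqrt t)⁻¹) := by ring
  have hswap := integral_integral_swap hProd
  -- rewrite the original integrand
  have step1 : (∫ t in Ioi (0:ℝ), Real.exp (-b ^ 2 * (s + t) / 2) * Real.sqrt s /
      (Real.pi * (s + t) * Real.sqrt t))
      = ∫ t in Ioi (0:ℝ), (Real.sqrt s / Real.pi) * ∫ v in Ioi (0:ℝ), F t v := by
    apply setIntegral_congr_fun measurableSet_Ioi
    intro t ht
    have ht0 : (0:ℝ) < t := mem_Ioi.1 ht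
    have hst : (0:ℝ) < s + t := by linarith
    have hqt : (0:ℝ) < Real.sqrt t := Real.sqrt_pos.2 ht0
    dsimp only
    rw [hInner t ht0, show -b ^ 2 * (s + t) / 2 = -(c * (s + t)) by rw [hcdef]; ring]
    field_simp
  have step2 : ∀ v : ℝ, v ∈ Ioi (0:ℝ) → (∫ t in Ioi (0:ℝ), F t v)
      = Real.sqrt Real.pi * (Real.exp (-(s * (c + v))) * (Real.sqrt (c + v))⁻¹) := by
    intro v hv
    have hcv : (0:ℝ) < c + v := by have := mem_Ioi.1 hv; linarith
    have : (∫ t in Ioi (0:ℝ), F t v)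
        = ∫ t in Ioi (0:ℝ), Real.exp (-((c + v) * s))
            * (Real.exp (-((c + v) * t)) * (Real.sqrt t)⁻¹) := by
      apply setIntegral_congr_fun measurableSet_Ioi
      intro t _
      simp only [hF]
      rw [show -((c + v) * (s + t)) = -((c + v) * s) + -((c + v) * t) by ring, Real.exp_add]
      ring
    rw [this, integral_const_mul, gammaHalf_integral hcv]
    rw [show -((c + v) * s) = -(s * (c + v)) by ring]
    ring
  rw [step1, integral_const_mul, hswap]
  have step3 : (∫ v in Ioi (0:ℝ), ∫ t in Ioi (0:ℝ), F t v)
      = Real.sqrt Real.pi * (2 * ∫ z in Ioi (Real.sqrt c), Real.exp (-(s * z ^ 2))) := by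
    rw [setIntegral_congr_fun measurableSet_Ioi step2, integral_const_mul,
      shift_sq_integral hs hc]
  rw [step3, Phi_eq_gauss_integral hb hs,
    show Real.sqrt (b ^ 2 / 2) = Real.sqrt c from rfl]
  have h2pi : Real.sqrt (2 * Real.pi) = Real.sqrt 2 * Real.sqrt Real.pi :=
    Real.sqrt_mul (by norm_num) _
  have h2s : Real.sqrt (2 * s) = Real.sqrt 2 * Real.sqrt s :=
    Real.sqrt_mul (by norm_num) _
  have hpi : Real.sqrt Real.pi * Real.sqrt Real.pi = Real.pi :=
    Real.mul_self_sqrt Real.pi_pos.le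
  have h22 : Real.sqrt 2 * Real.sqrt 2 = 2 := Real.mul_self_sqrt (by norm_num)
  have hsqpi : (0:ℝ) < Real.sqrt Real.pi := Real.sqrt_pos.2 Real.pi_pos
  have hsq2 : (0:ℝ) < Real.sqrt 2 := Real.sqrt_pos.2 (by norm_num)
  set G := ∫ z in Ioi (Real.sqrt c), Real.exp (-(s * z ^ 2)) with hG
  have hcoef : Real.sqrt s / Real.pi * (Real.sqrt Real.pi * 2)
      = 2 * (Real.sqrt (2 * s) * (Real.sqrt (2 * Real.pi))⁻¹) := by
    rw [h2pi, h2s, ← hpi]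
    field_simp
    rw [Real.sqrt_sq hsqpi.le]
  linear_combination G * hcoef

lemma fpt_continuousOn (a x b : ℝ) : ContinuousOn (fpt a x b) (Ioi 0) := by
  unfold fpt
  apply ContinuousOn.mul
  · apply continuousOn_const.mul
    intro s hs
    exact (Real.continuousAt_rpow_const s _ (Or.inl (mem_Ioi.1 hs).ne')).continuousWithinAt
  · apply stdPhi_cont.comp_continuousOn
    apply ContinuousOn.div
    · fun_prop
    · exact Real.continuous_sqrt.continuousOn
    · intro s hs
      exact (Real.sqrt_pos.2 (mem_Ioi.1 hs)).ne'

lemma phiComp_measurable (b : ℝ) : Measurable (fun s => Phi (b * Real.sqrt s)) :=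
  Phi_mono.measurable.comp (measurable_const.mul Real.continuous_sqrt.measurable)

/-- for `x < a` and `b < 0`,
`P(T₂ = +∞) = 1 - ∫_0^∞ f(s) (∫_0^∞ e^{-b²(s+t)/2} √s/(π(s+t)√t) dt) ds
  = ∫_0^∞ (1 - 2Φ(b√s)) f(s) ds > 0`. -/
theorem stmt_6 (a x b : ℝ) (hx : x < a) (hb : b < 0) :
    (1 - ∫ s in Set.Ioi (0:ℝ), fpt a x b s *
        ∫ t in Set.Ioi (0:ℝ),
          Real.exp (-b ^ 2 * (s + t) / 2) * Real.sqrt s /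
            (Real.pi * (s + t) * Real.sqrt t)) =
      (∫ s in Set.Ioi (0:ℝ), (1 - 2 * Phi (b * Real.sqrt s)) * fpt a x b s) ∧
    0 < ∫ s in Set.Ioi (0:ℝ), (1 - 2 * Phi (b * Real.sqrt s)) * fpt a x b s := by
  have hfint : IntegrableOn (fpt a x b) (Ioi 0) := fpt_integrableOn hx hb
  have hPhi_bound : ∀ s : ℝ, 0 < s → 0 ≤ 2 * Phi (b * Real.sqrt s)
      ∧ 2 * Phi (b * Real.sqrt s) < 1 := by
    intro s hs
    have harg : b * Real.sqrt s < 0 :=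
      mul_neg_of_neg_of_pos hb (Real.sqrt_pos.2 hs)
    have h1 := Phi_lt_half harg
    have h2 := Phi_nonneg (b * Real.sqrt s)
    constructor <;> linarith
  have hint2 : IntegrableOn (fun s => 2 * Phi (b * Real.sqrt s) * fpt a x b s) (Ioi 0) := by
    apply Integrable.mono' hfint
    · exact ((measurable_const.mul (phiComp_measurable b)).aestronglyMeasurable.restrict).mul
        ((fpt_continuousOn a x b).aestronglyMeasurable measurableSet_Ioi)
    · filter_upwards [ae_restrict_mem measurableSet_Ioi] with s hs
      have hs0 : (0:ℝ) < s := mem_Ioi.1 hs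
      obtain ⟨h1, h2⟩ := hPhi_bound s hs0
      have hf : 0 < fpt a x b s := fpt_pos hx hs0
      rw [Real.norm_of_nonneg (mul_nonneg h1 hf.le)]
      nlinarith
  have hcongr : (∫ s in Ioi (0:ℝ), fpt a x b s *
      ∫ t in Ioi (0:ℝ), Real.exp (-b ^ 2 * (s + t) / 2) * Real.sqrt s /
        (Real.pi * (s + t) * Real.sqrt t))
      = ∫ s in Ioi (0:ℝ), 2 * Phi (b * Real.sqrt s) * fpt a x b s := by
    apply setIntegral_congr_fun measurableSet_Ioi
    intro s hs
    have hs0 : (0:ℝ) < s := mem_Ioi.1 hs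
    dsimp only
    rw [inner_integral_eq hb hs0]
    ring
  have hsub : (∫ s in Ioi (0:ℝ), (1 - 2 * Phi (b * Real.sqrt s)) * fpt a x b s)
      = (∫ s in Ioi (0:ℝ), fpt a x b s)
        - ∫ s in Ioi (0:ℝ), 2 * Phi (b * Real.sqrt s) * fpt a x b s := by
    rw [← integral_sub hfint hint2]
    apply setIntegral_congr_fun measurableSet_Ioi
    intro s _
    ring
  constructor
  · rw [hcongr, hsub, integral_fpt hx hb]
  · have hnn : 0 ≤ᵐ[volume.restrict (Ioi (0:ℝ))]
        fun s => (1 - 2 * Phi (b * Real.sqrt s)) * fpt a x b s := by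
      filter_upwards [ae_restrict_mem measurableSet_Ioi] with s hs
      have hs0 : (0:ℝ) < s := mem_Ioi.1 hs
      obtain ⟨h1, h2⟩ := hPhi_bound s hs0
      exact mul_nonneg (by linarith) (fpt_pos hx hs0).le
    have hint3 : IntegrableOn
        (fun s => (1 - 2 * Phi (b * Real.sqrt s)) * fpt a x b s) (Ioi 0) := by
      apply IntegrableOn.congr_fun (hfint.sub hint2) _ measurableSet_Ioi
      intro s _
      simp only [Pi.sub_apply]
      ring
    rw [setIntegral_pos_iff_support_of_nonneg_ae hnn hint3]
    have hsupp : Ioi (0:ℝ) ⊆ Function.support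
        (fun s => (1 - 2 * Phi (b * Real.sqrt s)) * fpt a x b s) := by
      intro s hs
      have hs0 : (0:ℝ) < s := mem_Ioi.1 hs
      obtain ⟨h1, h2⟩ := hPhi_bound s hs0
      exact (mul_pos (by linarith) (fpt_pos hx hs0)).ne'
    have heq : Function.support (fun s => (1 - 2 * Phi (b * Real.sqrt s)) * fpt a x b s)
        ∩ Ioi (0:ℝ) = Ioi (0:ℝ) := inter_eq_self_of_subset_right hsupp
    rw [heq, Real.volume_Ioi]
    norm_num
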